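/- Let B ∈ ℂ^{n×n} be a matrix of rank at most k, and let V ∈ ℂ^{n×k} be a matrix whose k columns span both the column space of B and the column space of B† (equivalently, the range of B and the range of B† are contained in the span of the columns of V). Assume V†V is invertible. Then ‖B‖ ≤ ‖(V†V)^{-1}‖ · ‖V† B V‖. -/

import Mathlib

open Matrix

/-- The `ℓ²` operator norm of a rectangular complex matrix, via the induced continuous
linear map between Euclidean spaces. -/
noncomputable def toELin {m n : ℕ} (M : Matrix (Fin m) (Fin n) ℂ) :
    EuclideanSpace ℂ (Fin n) →L[ℂ] EuclideanSpace ℂ (Fin m) :=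
  LinearMap.toContinuousLinearMap (Matrix.toEuclideanLin M)

lemma toELin_mul {m n p : ℕ} (A : Matrix (Fin m) (Fin n) ℂ) (B : Matrix (Fin n) (Fin p) ℂ) :
    toELin (A * B) = (toELin A).comp (toELin B) := by
  ext x i
  simp [toELin, Matrix.toEuclideanLin_apply, Matrix.mulVec_mulVec]

lemma toELin_conjTranspose {m n : ℕ} (M : Matrix (Fin m) (Fin n) ℂ) :
    toELin Mᴴ = ContinuousLinearMap.adjoint (toELin M) := by
  apply ContinuousLinearMap.coe_injective
  show (Matrix.toEuclideanLin Mᴴ : _ →ₗ[ℂ] _) = _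
  rw [Matrix.toEuclideanLin_conjTranspose_eq_adjoint, LinearMap.adjoint_eq_toCLM_adjoint]
  rfl

lemma norm_toELin_conjTranspose {m n : ℕ} (M : Matrix (Fin m) (Fin n) ℂ) :
    ‖toELin Mᴴ‖ = ‖toELin M‖ := by
  rw [toELin_conjTranspose]
  exact LinearIsometryEquiv.norm_map ContinuousLinearMap.adjoint (toELin M)

lemma range_mulVec {n k m : ℕ} (M : Matrix (Fin n) (Fin m) ℂ) (V : Matrix (Fin n) (Fin k) ℂ)
    (h : LinearMap.range (toELin M : EuclideanSpace ℂ (Fin m) →ₗ[ℂ] EuclideanSpace ℂ (Fin n)) ≤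
      LinearMap.range (toELin V : EuclideanSpace ℂ (Fin k) →ₗ[ℂ] EuclideanSpace ℂ (Fin n))) :
    ∀ x : Fin m → ℂ, ∃ y : Fin k → ℂ, V *ᵥ y = M *ᵥ x := by
  intro x
  obtain ⟨y, hy⟩ := h ⟨(WithLp.equiv 2 (Fin m → ℂ)).symm x, rfl⟩
  refine ⟨WithLp.equiv 2 (Fin k → ℂ) y, ?_⟩
  have := congrArg (WithLp.equiv 2 (Fin n → ℂ)) hy
  simpa [toELin, Matrix.toEuclideanLin_apply] using this

/-- Projection lemma: if the range of `M` is inside range of `V`, `V(VᴴV)⁻¹Vᴴ` fixes `M`. -/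
lemma proj_fix {n k m : ℕ} (M : Matrix (Fin n) (Fin m) ℂ) (V : Matrix (Fin n) (Fin k) ℂ)
    (h : LinearMap.range (toELin M : EuclideanSpace ℂ (Fin m) →ₗ[ℂ] EuclideanSpace ℂ (Fin n)) ≤
      LinearMap.range (toELin V : EuclideanSpace ℂ (Fin k) →ₗ[ℂ] EuclideanSpace ℂ (Fin n)))
    (hinv : IsUnit (Vᴴ * V)) :
    V * ((Vᴴ * V)⁻¹ * (Vᴴ * M)) = M := by
  have hdet : IsUnit (Vᴴ * V).det := (Matrix.isUnit_iff_isUnit_det _).mp hinv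
  apply Matrix.toLin'.injective
  apply LinearMap.ext
  intro x
  rw [Matrix.toLin'_apply, Matrix.toLin'_apply]
  obtain ⟨y, hy⟩ := range_mulVec M V h x
  simp only [← Matrix.mulVec_mulVec]
  rw [← hy,Matrix.mulVec_mulVec y Vᴴ V, Matrix.mulVec_mulVec y (Vᴴ * V)⁻¹ (Vᴴ * V),
    Matrix.nonsing_inv_mul _ hdet, Matrix.one_mulVec]

/-- Let `B ∈ ℂ^{n×n}` have rank at most `k` and let `V ∈ ℂ^{n×k}` be a matrix
whose columns span both the column space of `B` and the column space of `B†` (i.e. the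
ranges of `B` and `B†` are contained in the span of the columns of `V`, which is the range
of `V`). If `V†V` is invertible then `‖B‖ ≤ ‖(V†V)⁻¹‖·‖V†BV‖` (operator norms). -/
theorem stmt_2 {n k : ℕ} (B : Matrix (Fin n) (Fin n) ℂ) (V : Matrix (Fin n) (Fin k) ℂ)
    (hrank : B.rank ≤ k)
    (hcol : LinearMap.range (toELin B : EuclideanSpace ℂ (Fin n) →ₗ[ℂ] EuclideanSpace ℂ (Fin n)) ≤
      LinearMap.range (toELin V : EuclideanSpace ℂ (Fin k) →ₗ[ℂ] EuclideanSpace ℂ (Fin n)))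
    (hrow : LinearMap.range (toELin Bᴴ : EuclideanSpace ℂ (Fin n) →ₗ[ℂ] EuclideanSpace ℂ (Fin n)) ≤
      LinearMap.range (toELin V : EuclideanSpace ℂ (Fin k) →ₗ[ℂ] EuclideanSpace ℂ (Fin n)))
    (hinv : IsUnit (Vᴴ * V)) :
    ‖toELin B‖ ≤ ‖toELin ((Vᴴ * V)⁻¹)‖ * ‖toELin (Vᴴ * B * V)‖ := by
  have hdet : IsUnit (Vᴴ * V).det := (Matrix.isUnit_iff_isUnit_det _).mp hinv
  have hGherm : ((Vᴴ * V)⁻¹)ᴴ = (Vᴴ * V)⁻¹ := by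
    rw [Matrix.conjTranspose_nonsing_inv, Matrix.conjTranspose_mul,
      Matrix.conjTranspose_conjTranspose]
  have h1 : V * ((Vᴴ * V)⁻¹ * (Vᴴ * B)) = B := proj_fix B V hcol hinv
  have h2 : V * ((Vᴴ * V)⁻¹ * (Vᴴ * Bᴴ)) = Bᴴ := proj_fix Bᴴ V hrow hinv
  have h2' : B * (V * ((Vᴴ * V)⁻¹ * Vᴴ)) = B := by
    have := congrArg Matrix.conjTranspose h2
    simp only [Matrix.conjTranspose_mul, Matrix.conjTranspose_conjTranspose, hGherm] at this
    simp only [Matrix.mul_assoc] at this; exact this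
  have hBid : B = (V * (Vᴴ * V)⁻¹) * ((Vᴴ * B * V) * ((Vᴴ * V)⁻¹ * Vᴴ)) := by
    calc B = B * (V * ((Vᴴ * V)⁻¹ * Vᴴ)) := h2'.symm
      _ = (V * ((Vᴴ * V)⁻¹ * (Vᴴ * B))) * (V * ((Vᴴ * V)⁻¹ * Vᴴ)) := by
          conv_lhs => rw [← h1]
      _ = (V * (Vᴴ * V)⁻¹) * ((Vᴴ * B * V) * ((Vᴴ * V)⁻¹ * Vᴴ)) := by
          simp only [Matrix.mul_assoc]
  have hWH : (V * (Vᴴ * V)⁻¹)ᴴ = (Vᴴ * V)⁻¹ * Vᴴ := by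
    rw [Matrix.conjTranspose_mul, hGherm]
  have hWHW : (V * (Vᴴ * V)⁻¹)ᴴ * (V * (Vᴴ * V)⁻¹) = (Vᴴ * V)⁻¹ := by
    rw [hWH]
    calc (Vᴴ * V)⁻¹ * Vᴴ * (V * (Vᴴ * V)⁻¹)
        = (Vᴴ * V)⁻¹ * ((Vᴴ * V) * (Vᴴ * V)⁻¹) := by simp only [Matrix.mul_assoc]
      _ = (Vᴴ * V)⁻¹ := by rw [Matrix.mul_nonsing_inv _ hdet, Matrix.mul_one]
  have hWnorm : ‖toELin (V * (Vᴴ * V)⁻¹)‖ * ‖toELin (V * (Vᴴ * V)⁻¹)‖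
      = ‖toELin ((Vᴴ * V)⁻¹)‖ := by
    have h := ContinuousLinearMap.norm_adjoint_comp_self (toELin (V * (Vᴴ * V)⁻¹))
    rw [← toELin_conjTranspose, ← toELin_mul, hWHW] at h
    exact h.symm
  calc ‖toELin B‖
      = ‖toELin ((V * (Vᴴ * V)⁻¹) * ((Vᴴ * B * V) * ((Vᴴ * V)⁻¹ * Vᴴ)))‖ := by rw [← hBid]
    _ ≤ ‖toELin (V * (Vᴴ * V)⁻¹)‖ * ‖toELin ((Vᴴ * B * V) * ((Vᴴ * V)⁻¹ * Vᴴ))‖ := by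
        rw [toELin_mul]; exact ContinuousLinearMap.opNorm_comp_le _ _
    _ ≤ ‖toELin (V * (Vᴴ * V)⁻¹)‖ * (‖toELin (Vᴴ * B * V)‖ * ‖toELin ((Vᴴ * V)⁻¹ * Vᴴ)‖) := by
        apply mul_le_mul_of_nonneg_left _ (norm_nonneg _)
        rw [toELin_mul]; exact ContinuousLinearMap.opNorm_comp_le _ _
    _ = ‖toELin (V * (Vᴴ * V)⁻¹)‖ * ‖toELin (V * (Vᴴ * V)⁻¹)‖ * ‖toELin (Vᴴ * B * V)‖ := by
        rw [← hWH, norm_toELin_conjTranspose]; ring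
    _ = ‖toELin ((Vᴴ * V)⁻¹)‖ * ‖toELin (Vᴴ * B * V)‖ := by rw [hWnorm]
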